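/- Let G=(V,E) be a finite connected simple graph. Then every initial 3-coloring X_0 : V → ℤ/3ℤ yields a 3-color CCA trajectory that synchronizes if and only if G is a tree (contains no cycle). -/

import Mathlib

noncomputable section
attribute [local instance] Classical.propDecidable

open Filter

variable {V : Type*}

/-- Unique representative in `{-1,0,1}` of an element of `ℤ/3ℤ`. -/
def ZMod.repInt (a : ZMod 3) : ℤ := if a = 0 then 0 else if a = 1 then 1 else -1

/-- One step of the 3-color cyclic cellular automaton. -/
def ccaStep (G : SimpleGraph V) (X : V → ZMod 3) : V → ZMod 3 :=
  fun v => if ∃ u, G.Adj v u ∧ X u = X v + 1 then X v + 1 else X v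

/-- The CCA trajectory started from `X₀`. -/
def ccaTraj (G : SimpleGraph V) (X₀ : V → ZMod 3) : ℕ → V → ZMod 3 :=
  fun t => (ccaStep G)^[t] X₀

/-- A vertex is excited at time `t` for CCA iff its color advances. -/
def ccaExcited (G : SimpleGraph V) (X₀ : V → ZMod 3) (t : ℕ) (v : V) : Prop :=
  ccaTraj G X₀ (t + 1) v = ccaTraj G X₀ t v + 1

/-- Number of excitations of `x` at times `0, …, t-1` (CCA). -/
def ccaNe (G : SimpleGraph V) (X₀ : V → ZMod 3) (t : ℕ) (x : V) : ℕ :=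
  ((Finset.range t).filter fun s => ccaExcited G X₀ s x).card

/-- The CCA 1-form `dX` on ordered pairs of vertices. -/
def dXcca (X : V → ZMod 3) (u v : V) : ℤ := (X v - X u).repInt

/-- Path integral of the CCA 1-form along a walk. -/
def walkIntCCA {G : SimpleGraph V} (X : V → ZMod 3) {x y : V} (w : G.Walk x y) : ℤ :=
  (w.darts.map fun d => dXcca X d.toProd.1 d.toProd.2).sum

/-! ### Auxiliary lemmas -/

lemma zmod3_cases (a : ZMod 3) : a = 0 ∨ a = 1 ∨ a = 2 := by revert a; decide

lemma repInt_zero' : (0:ZMod 3).repInt = 0 := by decide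
lemma repInt_one' : (1:ZMod 3).repInt = 1 := by decide
lemma repInt_two' : (2:ZMod 3).repInt = -1 := by decide
lemma repInt_neg' (a : ZMod 3) : (-a).repInt = - a.repInt := by revert a; decide

/-- Excitation indicator used in the edge-update rule. -/
def ccaE (G : SimpleGraph V) (Y : V → ZMod 3) (w : V) : ℤ :=
  if ∃ z, G.Adj w z ∧ Y z = Y w + 1 then 1 else 0

lemma key3 (a b : ZMod 3) (p q : Bool) (h1 : b = a + 1 → p = true) (h2 : a = b + 1 → q = true) :
    ((b + if q then 1 else 0) - (a + if p then 1 else 0)).repInt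
      = (b - a).repInt + (if q then (1:ℤ) else 0) - (if p then 1 else 0) := by
  revert a b p q; decide

lemma edge_update (G : SimpleGraph V) (Y : V → ZMod 3) {u v : V} (huv : G.Adj u v) :
    dXcca (ccaStep G Y) u v = dXcca Y u v + ccaE G Y v - ccaE G Y u := by
  unfold dXcca ccaStep ccaE
  by_cases hu : ∃ z, G.Adj u z ∧ Y z = Y u + 1 <;>
    by_cases hv : ∃ z, G.Adj v z ∧ Y z = Y v + 1
  · simp only [if_pos hu, if_pos hv]
    simpa using key3 (Y u) (Y v) true true (fun _ => rfl) (fun _ => rfl)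
  · simp only [if_pos hu, if_neg hv]
    simpa using key3 (Y u) (Y v) true false (fun _ => rfl)
      (fun h => absurd (⟨u, huv.symm, h⟩ : ∃ z, G.Adj v z ∧ Y z = Y v + 1) hv)
  · simp only [if_neg hu, if_pos hv]
    simpa using key3 (Y u) (Y v) false true
      (fun h => absurd (⟨v, huv, h⟩ : ∃ z, G.Adj u z ∧ Y z = Y u + 1) hu) (fun _ => rfl)
  · simp only [if_neg hu, if_neg hv]
    simpa using key3 (Y u) (Y v) false false
      (fun h => absurd (⟨v, huv, h⟩ : ∃ z, G.Adj u z ∧ Y z = Y u + 1) hu)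
      (fun h => absurd (⟨u, huv.symm, h⟩ : ∃ z, G.Adj v z ∧ Y z = Y v + 1) hv)

lemma walkIntCCA_nil {G : SimpleGraph V} (X : V → ZMod 3) {x : V} :
    walkIntCCA X (SimpleGraph.Walk.nil : G.Walk x x) = 0 := rfl

lemma walkIntCCA_cons {G : SimpleGraph V} (X : V → ZMod 3) {x m y : V} (h : G.Adj x m)
    (p : G.Walk m y) :
    walkIntCCA X (SimpleGraph.Walk.cons h p) = dXcca X x m + walkIntCCA X p := by
  unfold walkIntCCA
  rw [SimpleGraph.Walk.darts_cons, List.map_cons, List.sum_cons]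

lemma walkInt_step (G : SimpleGraph V) (Y : V → ZMod 3) {x y : V} (w : G.Walk x y) :
    walkIntCCA (ccaStep G Y) w = walkIntCCA Y w + ccaE G Y y - ccaE G Y x := by
  induction w with
  | nil => simp [walkIntCCA_nil]
  | cons h p ih =>
    rw [walkIntCCA_cons, walkIntCCA_cons, edge_update G Y h, ih]; ring

lemma traj_succ (G : SimpleGraph V) (X₀ : V → ZMod 3) (t : ℕ) :
    ccaTraj G X₀ (t+1) = ccaStep G (ccaTraj G X₀ t) :=
  Function.iterate_succ_apply' _ _ _

lemma walkInt_traj (G : SimpleGraph V) (X₀ : V → ZMod 3) {x : V} (w : G.Walk x x) (t : ℕ) :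
    walkIntCCA (ccaTraj G X₀ t) w = walkIntCCA X₀ w := by
  induction t with
  | zero => rfl
  | succ t ih => rw [traj_succ, walkInt_step, ih]; ring

lemma walkInt_const {G : SimpleGraph V} (X : V → ZMod 3) (hX : ∀ a b : V, X a = X b)
    {x y : V} (w : G.Walk x y) : walkIntCCA X w = 0 := by
  induction w with
  | nil => rfl
  | cons h p ih =>
    rw [walkIntCCA_cons, ih]
    unfold dXcca
    rw [hX _ _, sub_self, repInt_zero', zero_add]

lemma C1 {G : SimpleGraph V} (X : V → ZMod 3) {y : V} :
    ∀ {x : V} (p : G.Walk x y), p.IsPath → x ≠ y → X y = 0 →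
      (∀ u ∈ p.support, u ≠ y → X u = 2) → walkIntCCA X p = 1 := by
  intro x p
  induction p with
  | nil => intro _ hxy _ _; exact absurd rfl hxy
  | @cons x m y h p ih =>
    intro hp hxy hy hsupp
    have hxX : X x = 2 := hsupp x (by simp) hxy
    by_cases hm : m = y
    · subst hm
      have hpnil : p = SimpleGraph.Walk.nil := SimpleGraph.Walk.isPath_iff_eq_nil.mp hp.of_cons
      subst hpnil
      rw [walkIntCCA_cons, walkIntCCA_nil, add_zero]
      unfold dXcca
      rw [hy, hxX]
      decide
    · have hmX : X m = 2 := hsupp m (by simp) hm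
      rw [walkIntCCA_cons,
        ih hp.of_cons hm hy (fun u hu hne => hsupp u (by simp [hu]) hne)]
      unfold dXcca
      rw [hxX, hmX, sub_self, repInt_zero', zero_add]

/-- In a non-acyclic graph there is a coloring with nonzero winding along some closed walk. -/
lemma exists_nonzero_winding {G : SimpleGraph V} (hnot : ¬ G.IsAcyclic) :
    ∃ (v : V) (c : G.Walk v v) (X₀ : V → ZMod 3), walkIntCCA X₀ c = 3 := by
  simp only [SimpleGraph.IsAcyclic, not_forall, not_not] at hnot
  obtain ⟨v, c, hc⟩ := hnot
  cases c with
  | nil => exact absurd hc.three_le_length (by simp)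
  | @cons _ u₁ _ hadj q =>
    have hqnodup : q.support.Nodup := by
      have := hc.support_nodup
      rwa [SimpleGraph.Walk.support_cons, List.tail_cons] at this
    have hqpath : q.IsPath := SimpleGraph.Walk.IsPath.mk' hqnodup
    have hlen : 2 ≤ q.length := by
      have := hc.three_le_length
      rw [SimpleGraph.Walk.length_cons] at this
      omega
    have hu₁v : u₁ ≠ v := hadj.ne'
    refine ⟨v, SimpleGraph.Walk.cons hadj q,
      fun w => if w = v then 0 else if w = u₁ then 1 else 2, ?_⟩
    set X₀ : V → ZMod 3 := fun w => if w = v then 0 else if w = u₁ then 1 else 2 with hX₀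
    have hXv : X₀ v = 0 := by simp [hX₀]
    have hXu₁ : X₀ u₁ = 1 := by simp [hX₀, hu₁v]
    cases q with
    | nil => exact absurd hadj (G.irrefl)
    | @cons _ w₂ _ hadj2 q2 =>
      have hq2path : q2.IsPath := hqpath.of_cons
      have hw₂v : w₂ ≠ v := by
        intro h; subst h
        have : q2 = SimpleGraph.Walk.nil := SimpleGraph.Walk.isPath_iff_eq_nil.mp hq2path
        subst this
        simp at hlen
      have hw₂u₁ : w₂ ≠ u₁ := hadj2.ne'
      have hu₁notin : u₁ ∉ q2.support := (SimpleGraph.Walk.cons_isPath_iff _ _).mp hqpath |>.2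
      have hXw₂ : X₀ w₂ = 2 := by simp [hX₀, hw₂v, hw₂u₁]
      have hq2 : walkIntCCA X₀ q2 = 1 := by
        refine C1 X₀ q2 hq2path hw₂v hXv (fun u hu hne => ?_)
        have hneu₁ : u ≠ u₁ := fun h => hu₁notin (h ▸ hu)
        simp [hX₀, hne, hneu₁]
      rw [walkIntCCA_cons, walkIntCCA_cons, hq2]
      unfold dXcca
      rw [hXv, hXu₁, hXw₂]
      norm_num
      decide

lemma excited_iff (G : SimpleGraph V) (X₀ : V → ZMod 3) (t : ℕ) (v : V) :
    ccaExcited G X₀ t v ↔ ∃ z, G.Adj v z ∧ ccaTraj G X₀ t z = ccaTraj G X₀ t v + 1 := by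
  unfold ccaExcited
  rw [traj_succ]
  show (if ∃ u, G.Adj v u ∧ ccaTraj G X₀ t u = ccaTraj G X₀ t v + 1
      then ccaTraj G X₀ t v + 1 else ccaTraj G X₀ t v) = ccaTraj G X₀ t v + 1 ↔ _
  by_cases hcond : ∃ z, G.Adj v z ∧ ccaTraj G X₀ t z = ccaTraj G X₀ t v + 1
  · simp [hcond]
  · rw [if_neg hcond]
    simp only [hcond, iff_false]
    intro h
    exact (by decide : (1:ZMod 3) ≠ 0) (by
      have := h
      nth_rewrite 1 [show ccaTraj G X₀ t v = ccaTraj G X₀ t v + 0 by ring] at this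
      exact (add_left_cancel this).symm)

lemma not_excited_eq (G : SimpleGraph V) (X₀ : V → ZMod 3) (t : ℕ) (v : V)
    (hne : ¬ ccaExcited G X₀ t v) : ccaTraj G X₀ (t+1) v = ccaTraj G X₀ t v := by
  rw [traj_succ]
  show (if ∃ u, G.Adj v u ∧ ccaTraj G X₀ t u = ccaTraj G X₀ t v + 1
      then ccaTraj G X₀ t v + 1 else ccaTraj G X₀ t v) = ccaTraj G X₀ t v
  rw [if_neg (fun hcond => hne ((excited_iff G X₀ t v).mpr hcond))]

lemma ne_zero' (G : SimpleGraph V) (X₀ : V → ZMod 3) (v : V) : ccaNe G X₀ 0 v = 0 := by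
  simp [ccaNe]

lemma ne_succ (G : SimpleGraph V) (X₀ : V → ZMod 3) (t : ℕ) (v : V) :
    ccaNe G X₀ (t+1) v = ccaNe G X₀ t v + (if ccaExcited G X₀ t v then 1 else 0) := by
  unfold ccaNe
  rw [Finset.range_add_one, Finset.filter_insert]
  by_cases h : ccaExcited G X₀ t v
  · rw [if_pos h, if_pos h, Finset.card_insert_of_notMem (by simp)]
  · rw [if_neg h, if_neg h, add_zero]

lemma ne_mono (G : SimpleGraph V) (X₀ : V → ZMod 3) {s t : ℕ} (v : V) (hst : s ≤ t) :
    ccaNe G X₀ s v ≤ ccaNe G X₀ t v :=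
  Finset.card_le_card (Finset.filter_subset_filter _ (Finset.range_subset_range.mpr hst))

lemma ccaE_eq (G : SimpleGraph V) (X₀ : V → ZMod 3) (t : ℕ) (w : V) :
    ccaE G (ccaTraj G X₀ t) w = (if ccaExcited G X₀ t w then (1:ℤ) else 0) := by
  unfold ccaE
  exact if_congr (excited_iff G X₀ t w).symm rfl rfl

lemma potential_invariant (G : SimpleGraph V) (X₀ : V → ZMod 3) (h0 : V → ℤ)
    (hA : ∀ {u v : V}, G.Adj u v → h0 v - h0 u = dXcca X₀ u v) :
    ∀ (t : ℕ) {u v : V}, G.Adj u v →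
      (h0 v + (ccaNe G X₀ t v : ℤ)) - (h0 u + (ccaNe G X₀ t u : ℤ))
        = dXcca (ccaTraj G X₀ t) u v := by
  intro t
  induction t with
  | zero =>
    intro u v huv
    rw [ne_zero', ne_zero']
    simpa [ccaTraj] using hA huv
  | succ t ih =>
    intro u v huv
    rw [traj_succ, edge_update G _ huv, ccaE_eq, ccaE_eq, ← ih huv,
      ne_succ G X₀ t v, ne_succ G X₀ t u]
    push_cast
    by_cases h1 : ccaExcited G X₀ t v <;> by_cases h2 : ccaExcited G X₀ t u <;>
      simp [h1, h2] <;> ring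

lemma potential_bounded [Fintype V] [Nonempty V] (G : SimpleGraph V) (X₀ : V → ZMod 3)
    (h0 : V → ℤ) (hA : ∀ {u v : V}, G.Adj u v → h0 v - h0 u = dXcca X₀ u v) :
    ∀ (t : ℕ) (v : V), h0 v + (ccaNe G X₀ t v : ℤ)
      ≤ Finset.univ.sup' Finset.univ_nonempty h0 := by
  intro t
  induction t with
  | zero =>
    intro v
    rw [ne_zero']
    simp only [Nat.cast_zero, add_zero]
    exact Finset.le_sup' h0 (Finset.mem_univ v)
  | succ t ih =>
    intro v
    by_cases hex : ccaExcited G X₀ t v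
    · obtain ⟨z, hzadj, hz⟩ := (excited_iff G X₀ t v).mp hex
      have hdx : dXcca (ccaTraj G X₀ t) v z = 1 := by
        unfold dXcca
        rw [hz, add_sub_cancel_left, repInt_one']
      have hD := potential_invariant G X₀ h0 @hA t hzadj
      rw [hdx] at hD
      have hz' := ih z
      rw [ne_succ, if_pos hex]
      push_cast
      linarith
    · rw [ne_succ, if_neg hex, add_zero]
      exact ih v

lemma excitations_finite [Fintype V] [Nonempty V] (G : SimpleGraph V) (X₀ : V → ZMod 3)
    (h0 : V → ℤ) (hA : ∀ {u v : V}, G.Adj u v → h0 v - h0 u = dXcca X₀ u v) (v : V) :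
    Set.Finite {s : ℕ | ccaExcited G X₀ s v} := by
  set B : ℤ := Finset.univ.sup' Finset.univ_nonempty h0 - h0 v with hB
  have hbound : ∀ t, (ccaNe G X₀ t v : ℤ) ≤ B := by
    intro t
    have := potential_bounded G X₀ h0 @hA t v
    omega
  have hkey : ∀ {a b : ℕ}, ccaExcited G X₀ a v → a < b →
      ccaNe G X₀ a v < ccaNe G X₀ b v := by
    intro a b ha hab
    have h1 : ccaNe G X₀ (a+1) v = ccaNe G X₀ a v + 1 := by
      rw [ne_succ, if_pos ha]
    have h2 : ccaNe G X₀ (a+1) v ≤ ccaNe G X₀ b v := ne_mono G X₀ v hab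
    omega
  apply Set.Finite.of_finite_image (f := fun s => ccaNe G X₀ s v)
  · apply Set.Finite.subset (Set.finite_Icc 0 B.toNat)
    rintro n ⟨s, _, rfl⟩
    have := hbound s
    simp only [Set.mem_Icc]
    omega
  · intro s hs t ht hst
    rcases lt_trichotomy s t with h | h | h
    · exact absurd hst (Nat.ne_of_lt (hkey hs h))
    · exact h
    · exact absurd hst.symm (Nat.ne_of_lt (hkey ht h))

lemma exists_potential (G : SimpleGraph V) (hconn : G.Connected) (hacyc : G.IsAcyclic)
    (X₀ : V → ZMod 3) :
    ∃ h0 : V → ℤ, ∀ {u v : V}, G.Adj u v → h0 v - h0 u = dXcca X₀ u v := by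
  haveI : Nonempty V := hconn.nonempty
  have path_uniq : ∀ {a b : V} (p q : G.Walk a b), p.IsPath → q.IsPath → p = q := by
    intro a b p q hp hq
    exact congrArg Subtype.val
      (SimpleGraph.isAcyclic_iff_path_unique.mp hacyc ⟨p, hp⟩ ⟨q, hq⟩)
  set r := Classical.arbitrary V with hr
  have hw0 : ∀ v : V, ∃ w : G.Walk r v, w.IsPath :=
    fun v => ⟨((hconn.preconnected r v).some).bypass, SimpleGraph.Walk.bypass_isPath _⟩
  choose w0 hw0p using hw0
  refine ⟨fun v => walkIntCCA X₀ (w0 v), ?_⟩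
  intro u v huv
  by_cases hv : v ∈ (w0 u).support
  · have hsplit := SimpleGraph.Walk.take_spec (w0 u) hv
    have htake : ((w0 u).takeUntil v hv).IsPath := (hw0p u).takeUntil hv
    have hdrop : ((w0 u).dropUntil v hv).IsPath := (hw0p u).dropUntil hv
    have e1 : (w0 u).takeUntil v hv = w0 v := path_uniq _ _ htake (hw0p v)
    have hsingle : (SimpleGraph.Walk.cons huv.symm SimpleGraph.Walk.nil : G.Walk v u).IsPath := by
      simp [SimpleGraph.Walk.cons_isPath_iff, huv.ne']
    have e2 : (w0 u).dropUntil v hv = SimpleGraph.Walk.cons huv.symm SimpleGraph.Walk.nil :=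
      path_uniq _ _ hdrop hsingle
    have hsum : walkIntCCA X₀ (w0 u)
        = walkIntCCA X₀ ((w0 u).takeUntil v hv) + walkIntCCA X₀ ((w0 u).dropUntil v hv) := by
      conv_lhs => rw [← hsplit]
      unfold walkIntCCA
      rw [SimpleGraph.Walk.darts_append, List.map_append, List.sum_append]
    rw [e1, e2] at hsum
    have hcons : walkIntCCA X₀ (SimpleGraph.Walk.cons huv.symm SimpleGraph.Walk.nil : G.Walk v u)
        = dXcca X₀ v u := by
      rw [walkIntCCA_cons, walkIntCCA_nil, add_zero]
    have hanti : dXcca X₀ v u = - dXcca X₀ u v := by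
      unfold dXcca
      rw [show X₀ u - X₀ v = -(X₀ v - X₀ u) by ring, repInt_neg']
    rw [hcons, hanti] at hsum
    simp only
    omega
  · have hcpath : ((w0 u).concat huv).IsPath := by
      apply SimpleGraph.Walk.IsPath.mk'
      rw [SimpleGraph.Walk.support_concat]
      rw [List.nodup_append]
      refine ⟨(hw0p u).support_nodup, List.nodup_singleton v, ?_⟩
      intro a ha b hb hab
      simp only [List.mem_singleton] at hb
      subst hb
      subst hab
      exact hv ha
    have e : (w0 u).concat huv = w0 v := path_uniq _ _ hcpath (hw0p v)
    have hsum : walkIntCCA X₀ ((w0 u).concat huv)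
        = walkIntCCA X₀ (w0 u) + dXcca X₀ u v := by
      unfold walkIntCCA
      rw [SimpleGraph.Walk.darts_concat, List.concat_eq_append, List.map_append,
        List.sum_append]
      simp
    rw [e] at hsum
    simp only
    omega

/-- On a finite connected graph, every initial 3-coloring yields a synchronizing CCA
trajectory iff the graph is a tree (i.e., acyclic). -/
theorem cca_all_initial_colorings_synchronize_iff_tree [Fintype V] (G : SimpleGraph V)
    (hconn : G.Connected) :
    (∀ X₀ : V → ZMod 3, ∀ x y : V, ∃ N : ℕ, ∀ t ≥ N,
      ccaTraj G X₀ t x = ccaTraj G X₀ t y) ↔ G.IsAcyclic := by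
  constructor
  · intro hsync
    by_contra hnot
    obtain ⟨v, c, X₀, hwind⟩ := exists_nonzero_winding hnot
    choose N hN using hsync X₀ v
    set T := Finset.univ.sup N with hT
    have hconst : ∀ a b : V, ccaTraj G X₀ T a = ccaTraj G X₀ T b := by
      intro a b
      have ha := hN a T (Finset.le_sup (Finset.mem_univ a))
      have hb := hN b T (Finset.le_sup (Finset.mem_univ b))
      rw [← ha, ← hb]
    have h0 : walkIntCCA (ccaTraj G X₀ T) c = 0 := walkInt_const _ hconst c
    rw [walkInt_traj, hwind] at h0
    norm_num at h0
  · intro hacyc X₀ x y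
    haveI : Nonempty V := hconn.nonempty
    obtain ⟨h0, hA⟩ := exists_potential G hconn hacyc X₀
    have hfin := fun v => excitations_finite G X₀ h0 @hA v
    have hNv : ∀ v : V, ∃ Nv : ℕ, ∀ s, Nv ≤ s → ¬ ccaExcited G X₀ s v := by
      intro v
      obtain ⟨m, hm⟩ := (hfin v).bddAbove
      exact ⟨m+1, fun s hs hex => by have := hm hex; omega⟩
    choose Nf hNf using hNv
    set N := Finset.univ.sup Nf with hNdef
    have hquiet : ∀ t, N ≤ t → ∀ v, ¬ ccaExcited G X₀ t v :=
      fun t ht v => hNf v t (le_trans (Finset.le_sup (Finset.mem_univ v)) ht)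
    have hfreeze : ∀ t, N ≤ t → ∀ v, ccaTraj G X₀ t v = ccaTraj G X₀ N v := by
      intro t ht
      induction t, ht using Nat.le_induction with
      | base => intro v; rfl
      | succ t ht ih =>
        intro v
        rw [not_excited_eq G X₀ t v (hquiet t ht v)]
        exact ih v
    have hadjeq : ∀ {a b : V}, G.Adj a b → ccaTraj G X₀ N a = ccaTraj G X₀ N b := by
      intro a b hab
      rcases zmod3_cases (ccaTraj G X₀ N b - ccaTraj G X₀ N a) with h | h | h
      · exact (sub_eq_zero.mp h).symm
      · have hba : ccaTraj G X₀ N b = ccaTraj G X₀ N a + 1 := by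
          rw [← h]; ring
        exact absurd ((excited_iff G X₀ N a).mpr ⟨b, hab, hba⟩) (hquiet N le_rfl a)
      · have hab' : ccaTraj G X₀ N a = ccaTraj G X₀ N b + 1 := by
          have h2 : ccaTraj G X₀ N a = ccaTraj G X₀ N b - 2 := by rw [← h]; ring
          rw [h2, sub_eq_add_neg, show (-(2:ZMod 3)) = 1 by decide]
        exact absurd ((excited_iff G X₀ N b).mpr ⟨a, hab.symm, hab'⟩) (hquiet N le_rfl b)
    have hwalkeq : ∀ a b : V, ccaTraj G X₀ N a = ccaTraj G X₀ N b := by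
      intro a b
      have key : ∀ (w : G.Walk a b), ccaTraj G X₀ N a = ccaTraj G X₀ N b := by
        intro w
        induction w with
        | nil => rfl
        | cons h p ih => exact (hadjeq h).trans ih
      exact key (hconn.preconnected a b).some
    exact ⟨N, fun t ht => by rw [hfreeze t ht x, hfreeze t ht y]; exact hwalkeq x y⟩
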